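/- MAJ(π) equals the total count of occurrences of the vincular patterns \underline{21} + 1\underline{32} + 2\underline{31} + 3\underline{21} in π, for every permutation π. -/

import Mathlib

/-- Value of the word `l` at 1-based position `i` (0 if out of range). -/
def wv (l : List ℕ) (i : ℕ) : ℕ := l.getD (i - 1) 0

/-- Descent set (1-based positions `i < n` with `wᵢ > wᵢ₊₁`). -/
def DSet (l : List ℕ) : Finset ℕ :=
  (Finset.Ico 1 l.length).filter fun i => wv l (i + 1) < wv l i

def des (l : List ℕ) : ℕ := (DSet l).card

def MAJ (l : List ℕ) : ℕ := ∑ i ∈ DSet l, i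

/-- First letter. -/
def Fst (l : List ℕ) : ℕ := wv l 1

/-- Number of triples (i, i+1, j) with i+1 < j ≤ n satisfying the pattern
condition `p a b c` where a = wᵢ, b = wᵢ₊₁, c = wⱼ. -/
def tripCount (l : List ℕ) (p : ℕ → ℕ → ℕ → Bool) : ℕ :=
  (((Finset.Ico 1 l.length) ×ˢ (Finset.Icc 1 l.length)).filter
    (fun q => q.1 + 1 < q.2 ∧ p (wv l q.1) (wv l (q.1 + 1)) (wv l q.2) = true)).card

/-- Number of triples (i, j, j+1) with i < j, j+1 ≤ n satisfying
`p a b c` where a = wᵢ, b = wⱼ, c = wⱼ₊₁. -/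
def tripCount2 (l : List ℕ) (p : ℕ → ℕ → ℕ → Bool) : ℕ :=
  (((Finset.Icc 1 l.length) ×ˢ (Finset.Ico 1 l.length)).filter
    (fun q => q.1 < q.2 ∧ p (wv l q.1) (wv l q.2) (wv l (q.2 + 1)) = true)).card

/-- STAT on permutations: occurrences of 21 + 132 + 213 + 321 (first two letters adjacent). -/
def STATp (l : List ℕ) : ℕ :=
  des l + tripCount l (fun a b c =>
    decide ((a < c ∧ c < b) ∨ (b < a ∧ a < c) ∨ (c < b ∧ b < a)))

/-- STAT on words: occurrences of 213 + 212 + 132 + 121 + 321 + 21 (first two letters adjacent). -/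
def STATw (l : List ℕ) : ℕ :=
  des l + tripCount l (fun a b c =>
    decide ((b < a ∧ a < c) ∨ (b < a ∧ a = c) ∨ (a < c ∧ c < b) ∨
            (a = c ∧ c < b) ∨ (c < b ∧ b < a)))

/-- Standardization (coding map) of a word. -/
def stdz (l : List ℕ) : List ℕ :=
  (List.range l.length).map fun i =>
    ((List.range l.length).filter fun j =>
      decide (l.getD j 0 < l.getD i 0 ∨ (l.getD j 0 = l.getD i 0 ∧ j ≤ i))).length

/-- Inverse descent set: values v of the standardization such that v+1 occurs before v. -/
def IdSet (l : List ℕ) : Finset ℕ :=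
  (Finset.Icc 1 l.length).filter fun v =>
    ∃ i ∈ Finset.range l.length, ∃ j ∈ Finset.range l.length,
      j < i ∧ (stdz l).getD i 0 = v ∧ (stdz l).getD j 0 = v + 1

def ides (l : List ℕ) : ℕ := (IdSet l).card

def IMAJ (l : List ℕ) : ℕ := ∑ i ∈ IdSet l, i

/-- `l` is a permutation of {1, …, n} written in one-line notation. -/
def IsPermList (l : List ℕ) : Prop := l.Perm (List.range' 1 l.length)

def INV (l : List ℕ) : ℕ :=
  (((Finset.Icc 1 l.length) ×ˢ (Finset.Icc 1 l.length)).filter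
    (fun q => q.1 < q.2 ∧ wv l q.2 < wv l q.1)).card

/-- MAJ equals the number of occurrences of the vincular patterns
21 + 1(32) + 2(31) + 3(21) (adjacency on the last two letters). -/

lemma wv_inj (l : List ℕ) (hperm : IsPermList l) {i j : ℕ}
    (hi1 : 1 ≤ i) (hi2 : i ≤ l.length) (hj1 : 1 ≤ j) (hj2 : j ≤ l.length)
    (h : wv l i = wv l j) : i = j := by
  have hnd : l.Nodup := hperm.nodup_iff.mpr List.nodup_range'
  have hi : i - 1 < l.length := by omega
  have hj : j - 1 < l.length := by omega
  unfold wv at h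
  rw [List.getD_eq_getElem l 0 hi, List.getD_eq_getElem l 0 hj] at h
  have := (List.Nodup.getElem_inj_iff hnd).mp h
  omega

theorem stmt19 (l : List ℕ) (hperm : IsPermList l) :
    MAJ l = des l + tripCount2 l (fun a b c =>
      decide ((a < c ∧ c < b) ∨ (c < a ∧ a < b) ∨ (c < b ∧ b < a))) := by
  set n := l.length with hn
  have hS : (((Finset.Icc 1 n) ×ˢ (Finset.Ico 1 n)).filter
      (fun q => q.1 < q.2 ∧ (fun a b c =>
        decide ((a < c ∧ c < b) ∨ (c < a ∧ a < b) ∨ (c < b ∧ b < a)))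
        (wv l q.1) (wv l q.2) (wv l (q.2 + 1)) = true))
      = ((Finset.Icc 1 n) ×ˢ (Finset.Ico 1 n)).filter
        (fun q => q.1 < q.2 ∧ wv l (q.2 + 1) < wv l q.2) := by
    apply Finset.filter_congr
    intro q hq
    simp only [Finset.mem_product, Finset.mem_Icc, Finset.mem_Ico] at hq
    obtain ⟨⟨hi1, hi2⟩, hj1, hj2⟩ := hq
    simp only [decide_eq_true_eq]
    constructor
    · rintro ⟨hij, h | h | h⟩ <;> exact ⟨hij, by omega⟩
    · rintro ⟨hij, hcb⟩
      refine ⟨hij, ?_⟩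
      set a := wv l q.1; set b := wv l q.2; set c := wv l (q.2 + 1)
      have hab : a ≠ b := fun h => by
        have := wv_inj l hperm hi1 hi2 hj1 (by omega) h; omega
      have hac : a ≠ c := fun h => by
        have := wv_inj l hperm hi1 hi2 (by omega) (by omega) h; omega
      rcases lt_trichotomy a c with h1 | h1 | h1
      · exact Or.inl ⟨h1, hcb⟩
      · exact absurd h1 hac
      · rcases lt_trichotomy a b with h2 | h2 | h2
        · exact Or.inr (Or.inl ⟨h1, h2⟩)
        · exact absurd h2 hab
        · exact Or.inr (Or.inr ⟨hcb, h2⟩)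
  have htc : tripCount2 l (fun a b c =>
      decide ((a < c ∧ c < b) ∨ (c < a ∧ a < b) ∨ (c < b ∧ b < a)))
      = ∑ j ∈ DSet l, (j - 1) := by
    unfold tripCount2
    rw [← hn, hS, Finset.card_filter, Finset.sum_product_right]
    have : ∀ j ∈ Finset.Ico 1 n,
        (∑ i ∈ Finset.Icc 1 n, if i < j ∧ wv l (j+1) < wv l j then 1 else 0)
        = if wv l (j+1) < wv l j then j - 1 else 0 := by
      intro j hj
      simp only [Finset.mem_Ico] at hj
      by_cases h : wv l (j+1) < wv l j
      · simp only [h, and_true, if_true]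
        rw [Finset.sum_boole]
        have : (Finset.Icc 1 n).filter (· < j) = Finset.Ico 1 j := by
          ext x; simp only [Finset.mem_filter, Finset.mem_Icc, Finset.mem_Ico]; omega
        simp only [this, Nat.card_Ico, Nat.cast_id]
      · simp [h]
    rw [Finset.sum_congr rfl this]
    unfold DSet
    rw [Finset.sum_filter, ← hn]
  have hmaj : MAJ l = ∑ j ∈ DSet l, (j - 1) + des l := by
    unfold MAJ des
    rw [Finset.card_eq_sum_ones, ← Finset.sum_add_distrib]
    apply Finset.sum_congr rfl
    intro j hj
    have : 1 ≤ j := by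
      unfold DSet at hj
      simp only [Finset.mem_filter, Finset.mem_Ico] at hj
      omega
    omega
  rw [hmaj, htc]
  omega
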